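/- Let ν > 0 with m - 1 < ν ≤ m for a natural number m, and let f : [0,∞) → ℝ be m-times continuously differentiable with f and its derivatives of exponential order (so that all Laplace transforms converge and e^{-μt} d^k f/dt^k (t) → 0 as t → ∞ for all μ > 0 and 0 ≤ k ≤ m). Then for every μ > 0, the Laplace transform of the Dzherbashyan–Caputo derivative of order ν of f equals μ^ν times the Laplace transform of f minus the sum over k = 0, …, ⌈ν⌉ - 1 of μ^{ν-k-1} times the k-th derivative of f at 0. -/

import Mathlib

open MeasureTheory Set intervalIntegral
open Real Filter

lemma lap_ibp (μ : ℝ) (hμ : 0 < μ) (g : ℝ → ℝ)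
    (hg : Differentiable ℝ g)
    (h0 : Tendsto (fun t => Real.exp (-μ * t) * g t) atTop (nhds 0))
    (hig : IntegrableOn (fun t => Real.exp (-μ * t) * g t) (Ioi 0))
    (hig' : IntegrableOn (fun t => Real.exp (-μ * t) * deriv g t) (Ioi 0)) :
    ∫ t in Ioi (0:ℝ), Real.exp (-μ * t) * deriv g t
      = μ * (∫ t in Ioi (0:ℝ), Real.exp (-μ * t) * g t) - g 0 := by
  have hF : ∀ t : ℝ, HasDerivAt (fun t => Real.exp (-μ * t) * g t)
      (Real.exp (-μ * t) * deriv g t - μ * (Real.exp (-μ * t) * g t)) t := by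
    intro t
    have he : HasDerivAt (fun t : ℝ => Real.exp (-μ * t)) (-μ * Real.exp (-μ * t)) t := by
      simpa [mul_comm] using ((hasDerivAt_id t).const_mul (-μ)).exp
    have := he.fun_mul (hg t).hasDerivAt
    exact this.congr_deriv (by ring)
  have hint : IntegrableOn (fun t => Real.exp (-μ * t) * deriv g t
      - μ * (Real.exp (-μ * t) * g t)) (Ioi 0) := hig'.sub (hig.const_mul μ)
  have key := integral_Ioi_of_hasDerivAt_of_tendsto' (f' := fun t =>
      Real.exp (-μ * t) * deriv g t - μ * (Real.exp (-μ * t) * g t))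
      (fun x _ => hF x) hint h0
  have hsub : (∫ t in Ioi (0:ℝ), (Real.exp (-μ * t) * deriv g t - μ * (Real.exp (-μ * t) * g t)))
      = (∫ t in Ioi (0:ℝ), Real.exp (-μ * t) * deriv g t)
        - ∫ t in Ioi (0:ℝ), μ * (Real.exp (-μ * t) * g t) :=
    integral_sub hig' (hig.const_mul μ)
  have hmul : (∫ t in Ioi (0:ℝ), μ * (Real.exp (-μ * t) * g t))
      = μ * ∫ t in Ioi (0:ℝ), Real.exp (-μ * t) * g t := integral_const_mul _ _
  rw [hsub, hmul] at key
  simp only [mul_zero, neg_zero, Real.exp_zero, one_mul, zero_sub] at key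
  linarith

lemma lap_iter (μ : ℝ) (hμ : 0 < μ) :
    ∀ (m : ℕ) (f : ℝ → ℝ), ContDiff ℝ m f →
    (∀ k : ℕ, k ≤ m → Tendsto (fun t : ℝ => Real.exp (-μ * t) * iteratedDeriv k f t)
      atTop (nhds 0)) →
    (∀ k : ℕ, k ≤ m → IntegrableOn (fun t : ℝ => Real.exp (-μ * t) * iteratedDeriv k f t)
      (Ioi 0)) →
    (∫ t in Ioi (0:ℝ), Real.exp (-μ * t) * iteratedDeriv m f t)
      = μ ^ (m:ℝ) * (∫ t in Ioi (0:ℝ), Real.exp (-μ * t) * f t)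
        - ∑ k ∈ Finset.range m, μ ^ ((m:ℝ) - k - 1) * iteratedDeriv k f 0 := by
  intro m
  induction m with
  | zero => intro f hf h0 hi; simp [iteratedDeriv_zero]
  | succ m IH =>
    intro f hf h0 hi
    have hg : Differentiable ℝ (iteratedDeriv m f) :=
      hf.differentiable_iteratedDeriv m (by exact_mod_cast Nat.lt_succ_self m)
    have hd' : IntegrableOn (fun t : ℝ => Real.exp (-μ * t) * deriv (iteratedDeriv m f) t)
        (Ioi 0) := by
      simpa [← iteratedDeriv_succ] using hi (m+1) le_rfl
    have key := lap_ibp μ hμ (iteratedDeriv m f) hg (h0 m (Nat.le_succ m))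
      (hi m (Nat.le_succ m)) hd'
    have IH' := IH f (hf.of_le (by exact_mod_cast Nat.le_succ m))
      (fun k hk => h0 k (hk.trans (Nat.le_succ m)))
      (fun k hk => hi k (hk.trans (Nat.le_succ m)))
    rw [iteratedDeriv_succ, key, IH']
    push_cast
    rw [Finset.sum_range_succ]
    have e1 : μ ^ ((m:ℝ)+1) = μ * μ ^ (m:ℝ) := by
      rw [Real.rpow_add_one hμ.ne']; ring
    have e2 : ∀ k ∈ Finset.range m, μ ^ ((m:ℝ)+1 - k - 1) * iteratedDeriv k f 0
        = μ * (μ ^ ((m:ℝ) - k - 1) * iteratedDeriv k f 0) := by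
      intro k hk
      rw [show (m:ℝ)+1-k-1 = ((m:ℝ)-k-1)+1 by ring, Real.rpow_add_one hμ.ne']
      ring
    rw [Finset.sum_congr rfl e2, ← Finset.mul_sum, e1,
      show (m:ℝ)+1-m-1 = 0 by ring, Real.rpow_zero]
    ring

lemma base_int (μ α : ℝ) (hμ : 0 < μ) (hα : 0 < α) :
    IntegrableOn (fun u : ℝ => u ^ (α-1) * Real.exp (-(μ * u))) (Ioi 0) := by
  have := integrableOn_rpow_mul_exp_neg_mul_rpow
    (by linarith : (-1:ℝ) < α-1) zero_lt_one hμ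
  simpa [Real.rpow_one] using this

lemma shift_integrable (μ α s : ℝ) (hμ : 0 < μ) (hα : 0 < α) :
    IntegrableOn (fun t : ℝ => Real.exp (-μ * t) * (t - s) ^ (α-1)) (Ioi s) := by
  have A : MeasurableEmbedding (fun x : ℝ => x + s) :=
    (Homeomorph.addRight s).isClosedEmbedding.measurableEmbedding
  have base : IntegrableOn (fun u : ℝ => Real.exp (-μ * (u + s)) * u ^ (α-1)) (Ioi 0) := by
    have h := (base_int μ α hμ hα).const_mul (Real.exp (-μ * s))
    refine IntegrableOn.congr_fun h (fun u _ => ?_) measurableSet_Ioi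
    rw [show -μ*(u+s) = -(μ*u) + -μ*s by ring, Real.exp_add]
    ring
  rw [IntegrableOn, ← map_add_right_eq_self volume s,
    ← IntegrableOn, A.integrableOn_map_iff]
  have : (fun x : ℝ => x + s) ⁻¹' Ioi s = Ioi 0 := by
    ext x; simp [mem_Ioi]
  rw [this]
  refine IntegrableOn.congr_fun base (fun u _ => ?_) measurableSet_Ioi
  simp [Function.comp]

lemma shift_integral (μ α s : ℝ) (hμ : 0 < μ) (hα : 0 < α) :
    ∫ t in Ioi s, Real.exp (-μ * t) * (t - s) ^ (α-1)
      = Real.exp (-μ * s) * ((1/μ) ^ α * Real.Gamma α) := by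
  have A : MeasurableEmbedding (fun x : ℝ => x + s) :=
    (Homeomorph.addRight s).isClosedEmbedding.measurableEmbedding
  have hpre : (fun x : ℝ => x + s) ⁻¹' Ioi s = Ioi 0 := by
    ext x; simp [mem_Ioi]
  calc ∫ t in Ioi s, Real.exp (-μ * t) * (t - s) ^ (α-1)
      = ∫ t in Ioi s, Real.exp (-μ * t) * (t - s) ^ (α-1)
          ∂(Measure.map (fun x : ℝ => x + s) volume) := by
        rw [map_add_right_eq_self volume s]
    _ = ∫ u in Ioi (0:ℝ), Real.exp (-μ * (u + s)) * ((u + s) - s) ^ (α-1) := by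
        rw [A.setIntegral_map, hpre]
    _ = ∫ u in Ioi (0:ℝ), Real.exp (-μ * s) * (u ^ (α-1) * Real.exp (-(μ * u))) := by
        refine setIntegral_congr_fun measurableSet_Ioi (fun u _ => ?_)
        rw [show -μ*(u+s) = -(μ*u) + -μ*s by ring, Real.exp_add, add_sub_cancel_right]
        ring
    _ = Real.exp (-μ * s) * ((1/μ) ^ α * Real.Gamma α) := by
        rw [MeasureTheory.integral_const_mul, Real.integral_rpow_mul_exp_neg_mul_Ioi hα hμ]

lemma fubini_conv (μ α : ℝ) (hμ : 0 < μ) (hα : 0 < α) (g : ℝ → ℝ) (hg : Continuous g)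
    (hig : IntegrableOn (fun s : ℝ => Real.exp (-μ * s) * g s) (Ioi 0)) :
    ∫ t in Ioi (0:ℝ), Real.exp (-μ * t) * ∫ s in (0:ℝ)..t, (t - s) ^ (α - 1) * g s
      = (1/μ) ^ α * Real.Gamma α * ∫ s in Ioi (0:ℝ), Real.exp (-μ * s) * g s := by
  set C : ℝ := (1/μ) ^ α * Real.Gamma α with hC
  set S : Set (ℝ × ℝ) := {p : ℝ × ℝ | 0 < p.2 ∧ p.2 < p.1} with hS
  have hSopen : IsOpen S := by
    have : S = (fun p : ℝ × ℝ => p.2) ⁻¹' (Ioi 0) ∩ {p : ℝ × ℝ | p.2 < p.1} := by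
      ext p; simp [hS, mem_Ioi]
    rw [this]
    exact (isOpen_Ioi.preimage continuous_snd).inter (isOpen_lt continuous_snd continuous_fst)
  set F : ℝ × ℝ → ℝ := fun p => Real.exp (-μ * p.1) * ((p.1 - p.2) ^ (α - 1) * g p.2) with hF
  set K : ℝ × ℝ → ℝ := S.indicator F with hK
  have hFm : Measurable F := by
    rw [hF]; fun_prop
  have hKm : Measurable K := hFm.indicator hSopen.measurableSet
  -- slice in t for fixed s
  have slice : ∀ s : ℝ, 0 < s → (fun t => K (t, s))
      = (Ioi s).indicator (fun t => (Real.exp (-μ * t) * (t - s) ^ (α - 1)) * g s) := by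
    intro s hs
    funext t
    simp only [hK]
    by_cases ht : s < t
    · rw [indicator_of_mem (by exact ⟨hs, ht⟩ : (t, s) ∈ S),
        indicator_of_mem (by exact ht : t ∈ Ioi s)]
      simp only [hF]; ring
    · rw [indicator_of_notMem (by simp only [hS, mem_setOf_eq, not_and]; exact fun _ => ht),
        indicator_of_notMem (by simpa using ht)]
  have slice0 : ∀ s : ℝ, s ≤ 0 → (fun t => K (t, s)) = fun _ => (0:ℝ) := by
    intro s hs
    funext t
    simp only [hK]
    apply indicator_of_notMem
    simp only [hS, mem_setOf_eq, not_and]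
    exact fun h => absurd h (not_lt.2 hs)
  have slice_int : ∀ s : ℝ, Integrable (fun t => K (t, s)) := by
    intro s
    rcases le_or_gt s 0 with hs | hs
    · rw [slice0 s hs]; exact integrable_zero _ _ _
    · rw [slice s hs]
      exact IntegrableOn.integrable_indicator
        ((shift_integrable μ α s hμ hα).mul_const (g s)) measurableSet_Ioi
  have norm_slice : ∀ s : ℝ, 0 < s → (fun t => ‖K (t, s)‖)
      = (Ioi s).indicator (fun t => (Real.exp (-μ * t) * (t - s) ^ (α - 1)) * |g s|) := by
    intro s hs
    funext t
    rw [congrFun (slice s hs) t]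
    by_cases ht : s < t
    · rw [indicator_of_mem (by exact ht : t ∈ Ioi s),
        indicator_of_mem (by exact ht : t ∈ Ioi s), Real.norm_eq_abs, abs_mul]
      congr 1
      exact abs_of_nonneg (mul_nonneg (Real.exp_pos _).le
        (Real.rpow_nonneg (by linarith) _))
    · rw [indicator_of_notMem (by simpa using ht), indicator_of_notMem (by simpa using ht),
        norm_zero]
  have norm_int_fun : (fun s => ∫ t, ‖K (t, s)‖)
      = (Ioi (0:ℝ)).indicator (fun s => (Real.exp (-μ * s) * C) * |g s|) := by
    funext s
    rcases le_or_gt s 0 with hs | hs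
    · rw [indicator_of_notMem (by simpa using hs)]
      simp only [show ∀ t, K (t, s) = 0 from fun t => congrFun (slice0 s hs) t]
      simp
    · rw [indicator_of_mem (show s ∈ Ioi (0:ℝ) from hs), congrArg (fun h => ∫ t, h t) (norm_slice s hs),
        MeasureTheory.integral_indicator measurableSet_Ioi, MeasureTheory.integral_mul_const,
        shift_integral μ α s hμ hα]
  have hKint : Integrable K ((volume : Measure ℝ).prod volume) := by
    refine (integrable_prod_iff' hKm.aestronglyMeasurable).mpr ⟨?_, ?_⟩
    · exact Filter.Eventually.of_forall slice_int
    · rw [norm_int_fun]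
      refine IntegrableOn.integrable_indicator ?_ measurableSet_Ioi
      have h1 : IntegrableOn (fun s : ℝ => C * ‖Real.exp (-μ * s) * g s‖) (Ioi 0) :=
        (hig.norm.const_mul C)
      refine IntegrableOn.congr_fun h1 (fun s _ => ?_) measurableSet_Ioi
      rw [Real.norm_eq_abs, abs_mul, abs_of_pos (Real.exp_pos _)]
      ring
  have swap := integral_integral_swap (f := fun t s => K (t, s)) hKint
  have lhs_eq : (∫ t : ℝ, ∫ s : ℝ, K (t, s))
      = ∫ t in Ioi (0:ℝ), Real.exp (-μ * t) * ∫ s in (0:ℝ)..t, (t - s) ^ (α - 1) * g s := by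
    rw [← MeasureTheory.integral_indicator measurableSet_Ioi]
    congr 1
    funext t
    rcases le_or_gt t 0 with ht | ht
    · rw [indicator_of_notMem (by simpa using ht)]
      have hz : ∀ s, K (t, s) = 0 := by
        intro s
        simp only [hK]
        apply indicator_of_notMem
        simp only [hS, mem_setOf_eq, not_and]
        intro h1 h2
        linarith
      simp [hz]
    · rw [indicator_of_mem (show t ∈ Ioi (0:ℝ) from ht)]
      have hz : ∀ s, K (t, s)
          = (Ioo (0:ℝ) t).indicator (fun s => Real.exp (-μ * t) * ((t - s) ^ (α - 1) * g s)) s := by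
        intro s
        simp only [hK]
        by_cases hmem : s ∈ Ioo (0:ℝ) t
        · rw [indicator_of_mem hmem, indicator_of_mem (by exact ⟨hmem.1, hmem.2⟩ : (t, s) ∈ S)]
        · rw [indicator_of_notMem hmem, indicator_of_notMem (by
            simp only [hS, mem_setOf_eq, not_and]
            intro h1 h2
            exact hmem ⟨h1, h2⟩)]
      calc (∫ s : ℝ, K (t, s))
          = ∫ s : ℝ, (Ioo (0:ℝ) t).indicator
              (fun s => Real.exp (-μ * t) * ((t - s) ^ (α - 1) * g s)) s := by
            simp only [hz]
        _ = ∫ s in Ioo (0:ℝ) t, Real.exp (-μ * t) * ((t - s) ^ (α - 1) * g s) :=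
            MeasureTheory.integral_indicator measurableSet_Ioo
        _ = Real.exp (-μ * t) * ∫ s in Ioo (0:ℝ) t, (t - s) ^ (α - 1) * g s :=
            integral_const_mul _ _
        _ = Real.exp (-μ * t) * ∫ s in (0:ℝ)..t, (t - s) ^ (α - 1) * g s := by
            rw [intervalIntegral.integral_of_le ht.le, integral_Ioc_eq_integral_Ioo]
  have rhs_eq : (∫ s : ℝ, ∫ t : ℝ, K (t, s))
      = C * ∫ s in Ioi (0:ℝ), Real.exp (-μ * s) * g s := by
    have hfun : (fun s : ℝ => ∫ t : ℝ, K (t, s))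
        = (Ioi (0:ℝ)).indicator (fun s => C * (Real.exp (-μ * s) * g s)) := by
      funext s
      rcases le_or_gt s 0 with hs | hs
      · rw [indicator_of_notMem (by simpa using hs)]
        simp only [show ∀ t, K (t, s) = 0 from fun t => congrFun (slice0 s hs) t]
        simp
      · rw [indicator_of_mem (show s ∈ Ioi (0:ℝ) from hs), congrArg (fun h => ∫ t, h t) (slice s hs),
          MeasureTheory.integral_indicator measurableSet_Ioi, MeasureTheory.integral_mul_const,
          shift_integral μ α s hμ hα]
        ring
    rw [hfun, MeasureTheory.integral_indicator measurableSet_Ioi, MeasureTheory.integral_const_mul]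
  rw [← lhs_eq, swap, rhs_eq]

/-- The Dzherbashyan–Caputo fractional derivative of order `ν` with `m - 1 < ν ≤ m`. -/
noncomputable def caputoDeriv (ν : ℝ) (m : ℕ) (f : ℝ → ℝ) (t : ℝ) : ℝ :=
  if ν = m then iteratedDeriv m f t
  else (1 / Real.Gamma (m - ν)) * ∫ s in (0:ℝ)..t, (t - s) ^ ((m : ℝ) - ν - 1) * iteratedDeriv m f s

theorem laplace_caputoDeriv
    (ν : ℝ) (m : ℕ) (f : ℝ → ℝ)
    (hν₀ : 0 < ν) (hνm : (m : ℝ) - 1 < ν) (hνm' : ν ≤ m)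
    (hf : ContDiff ℝ m f)
    (hexp : ∀ μ : ℝ, 0 < μ → ∀ k : ℕ, k ≤ m →
      Filter.Tendsto (fun t : ℝ => Real.exp (-μ * t) * iteratedDeriv k f t)
        Filter.atTop (nhds 0))
    (hint : ∀ μ : ℝ, 0 < μ → ∀ k : ℕ, k ≤ m →
      IntegrableOn (fun t : ℝ => Real.exp (-μ * t) * iteratedDeriv k f t) (Ioi 0))
    (hintC : ∀ μ : ℝ, 0 < μ →
      IntegrableOn (fun t : ℝ => Real.exp (-μ * t) * caputoDeriv ν m f t) (Ioi 0)) :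
    ∀ μ : ℝ, 0 < μ →
      ∫ t in Ioi (0:ℝ), Real.exp (-μ * t) * caputoDeriv ν m f t =
        μ ^ ν * (∫ t in Ioi (0:ℝ), Real.exp (-μ * t) * f t)
          - ∑ k ∈ Finset.range ⌈ν⌉₊, μ ^ (ν - k - 1) * iteratedDeriv k f 0 := by
  intro μ hμ
  have hm1 : 1 ≤ m := by
    by_contra h
    push_neg at h
    interval_cases m
    · simp at hνm'
      exact absurd (hν₀.trans_le hνm') (lt_irrefl 0)
  have hceil : ⌈ν⌉₊ = m := by
    rw [Nat.ceil_eq_iff (by omega : m ≠ 0)]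
    refine ⟨?_, hνm'⟩
    rw [Nat.cast_sub hm1]
    simpa using hνm
  have L := lap_iter μ hμ m f hf (fun k hk => hexp μ hμ k hk) (fun k hk => hint μ hμ k hk)
  rw [hceil]
  by_cases hcase : ν = (m:ℝ)
  · subst hcase
    calc ∫ t in Ioi (0:ℝ), Real.exp (-μ * t) * caputoDeriv (m:ℝ) m f t
        = ∫ t in Ioi (0:ℝ), Real.exp (-μ * t) * iteratedDeriv m f t :=
          setIntegral_congr_fun measurableSet_Ioi
            (fun t _ => by rw [caputoDeriv, if_pos rfl])
      _ = _ := L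
  · have hν_lt : ν < m := lt_of_le_of_ne hνm' hcase
    set α : ℝ := (m:ℝ) - ν with hαdef
    have hα : 0 < α := by simp only [hαdef]; linarith
    have hΓ : Real.Gamma α ≠ 0 := (Real.Gamma_pos_of_pos hα).ne'
    have hgc : Continuous (iteratedDeriv m f) := hf.continuous_iteratedDeriv m le_rfl
    have key := fubini_conv μ α hμ hα (iteratedDeriv m f) hgc (hint μ hμ m le_rfl)
    have step : ∫ t in Ioi (0:ℝ), Real.exp (-μ * t) * caputoDeriv ν m f t
        = μ ^ (-α) * ∫ t in Ioi (0:ℝ), Real.exp (-μ * t) * iteratedDeriv m f t := by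
      calc ∫ t in Ioi (0:ℝ), Real.exp (-μ * t) * caputoDeriv ν m f t
          = ∫ t in Ioi (0:ℝ), (1 / Real.Gamma α)
              * (Real.exp (-μ * t) * ∫ s in (0:ℝ)..t, (t - s) ^ (α - 1) * iteratedDeriv m f s) := by
            refine setIntegral_congr_fun measurableSet_Ioi (fun t _ => ?_)
            rw [caputoDeriv, if_neg hcase]
            ring
        _ = (1 / Real.Gamma α) * ∫ t in Ioi (0:ℝ),
              Real.exp (-μ * t) * ∫ s in (0:ℝ)..t, (t - s) ^ (α - 1) * iteratedDeriv m f s :=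
            integral_const_mul _ _
        _ = (1 / Real.Gamma α) * ((1/μ) ^ α * Real.Gamma α
              * ∫ s in Ioi (0:ℝ), Real.exp (-μ * s) * iteratedDeriv m f s) := by rw [key]
        _ = μ ^ (-α) * ∫ t in Ioi (0:ℝ), Real.exp (-μ * t) * iteratedDeriv m f t := by
            rw [one_div μ, Real.inv_rpow hμ.le, ← Real.rpow_neg hμ.le]
            field_simp
    rw [step, L, mul_sub, ← mul_assoc, ← Real.rpow_add hμ, Finset.mul_sum]
    congr 1
    · congr 1
      simp only [hαdef]
      ring
    · refine Finset.sum_congr rfl (fun k hk => ?_)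
      rw [← mul_assoc, ← Real.rpow_add hμ]
      congr 2
      simp only [hαdef]
      ring
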